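/- Let p ≥ 1 and r ≥ 2. If G is a K_{r+1}-free graph of order n, then there exists a complete r-partite graph H on the same vertex set such that λ^(p)(H) ≥ λ^(p)(G). -/

import Mathlib

open Finset

open scoped Classical

/-- The p-spectral radius of a graph `G`:
`λ^(p)(G) = max { 2 ∑_{{i,j}∈E(G)} x_i x_j : ∑ |x_i|^p = 1 }`,
where the quadratic form is written as `∑ i ∑ j, if G.Adj i j then x i * x j else 0`. -/

noncomputable def pSpec {V : Type*} [Fintype V] (G : SimpleGraph V) (p : ℝ) : ℝ :=
  sSup {y : ℝ | ∃ x : V → ℝ, (∑ i, |x i| ^ p) = 1 ∧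
    y = ∑ i, ∑ j, if G.Adj i j then x i * x j else 0}

/-- Weighted Zykov/Motzkin–Straus-type lemma. -/
lemma key_lemma {V : Type*} [Fintype V] (G : SimpleGraph V) (y : V → ℝ)
    (hy : ∀ i, 0 ≤ y i) :
    ∀ r : ℕ, 1 ≤ r → ∀ A : Finset V, G.CliqueFreeOn (↑A) (r + 1) →
    ∃ f : V → Fin r,
      (∑ i ∈ A, ∑ j ∈ A, if G.Adj i j then y i * y j else 0) ≤
      ∑ i ∈ A, ∑ j ∈ A, if f i ≠ f j then y i * y j else 0 := by
  intro r hr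
  induction r, hr using Nat.le_induction with
  | base =>
    intro A hA
    refine ⟨fun _ => 0, ?_⟩
    rw [SimpleGraph.cliqueFreeOn_two] at hA
    have hL : (∑ i ∈ A, ∑ j ∈ A, if G.Adj i j then y i * y j else 0) = 0 := by
      refine Finset.sum_eq_zero fun i hi => Finset.sum_eq_zero fun j hj => ?_
      rw [if_neg]
      intro hadj
      exact hA (Finset.mem_coe.2 hi) (Finset.mem_coe.2 hj) hadj.ne hadj
    rw [hL]
    refine le_of_eq ?_
    refine (Finset.sum_eq_zero fun i hi => Finset.sum_eq_zero fun j hj => ?_).symm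
    simp
  | succ r hr ih =>
    intro A hA
    rcases A.eq_empty_or_nonempty with rfl | hAne
    · exact ⟨fun _ => 0, by simp⟩
    obtain ⟨v, hvA, hvmax⟩ := A.exists_max_image
      (fun w => ∑ i ∈ A, if G.Adj w i then y i else 0) hAne
    set B : Finset V := A.filter (fun u => G.Adj v u) with hB
    have hBA : B ⊆ A := Finset.filter_subset _ _
    have hBfree : G.CliqueFreeOn (↑B) (r + 1) := by
      have hA' : G.CliqueFreeOn (↑A) ((r + 1) + 1) := hA
      have h2 := SimpleGraph.CliqueFreeOn.of_succ (hs := hA') (ha := Finset.mem_coe.2 hvA)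
      refine SimpleGraph.CliqueFreeOn.subset (G := G) ?_ h2
      intro u hu
      have hu' : u ∈ B := hu
      rw [hB, Finset.mem_filter] at hu'
      exact ⟨Finset.mem_coe.2 hu'.1, hu'.2⟩
    obtain ⟨f', hf'⟩ := ih B hBfree
    classical
    refine ⟨fun i => if i ∈ B then (f' i).castSucc else Fin.last r, ?_⟩
    set f : V → Fin (r + 1) :=
      fun i => if i ∈ B then (f' i).castSucc else Fin.last r with hfdef
    set g : V → V → ℝ := fun i j => if G.Adj i j then y i * y j else 0 with hg
    set h : V → V → ℝ := fun i j => if f i ≠ f j then y i * y j else 0 with hh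
    have hg_le : ∀ i j, g i j ≤ y i * y j := by
      intro i j; rw [hg]; dsimp only
      split
      · exact le_rfl
      · exact mul_nonneg (hy i) (hy j)
    have hh_nonneg : ∀ i j, 0 ≤ h i j := by
      intro i j; rw [hh]; dsimp only
      split
      · exact mul_nonneg (hy i) (hy j)
      · exact le_rfl
    -- splitting of double sums
    have split : ∀ F : V → V → ℝ, (∑ i ∈ A, ∑ j ∈ A, F i j) =
        ((∑ i ∈ B, ∑ j ∈ B, F i j) + (∑ i ∈ B, ∑ j ∈ A \ B, F i j)) +
        ((∑ i ∈ A \ B, ∑ j ∈ B, F i j) + (∑ i ∈ A \ B, ∑ j ∈ A \ B, F i j)) := by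
      intro F
      have hin : ∀ s : Finset V, (∑ i ∈ s, ∑ j ∈ A, F i j) =
          (∑ i ∈ s, ∑ j ∈ A \ B, F i j) + (∑ i ∈ s, ∑ j ∈ B, F i j) := by
        intro s
        rw [← Finset.sum_add_distrib]
        exact Finset.sum_congr rfl fun i _ => (Finset.sum_sdiff hBA).symm
      rw [← Finset.sum_sdiff hBA (f := fun i => ∑ j ∈ A, F i j), hin, hin]
      ring
    set SB : ℝ := ∑ i ∈ B, y i with hSB
    set SC : ℝ := ∑ i ∈ A \ B, y i with hSC
    -- bounds on the G-side
    have b1 : (∑ i ∈ B, ∑ j ∈ A \ B, g i j) ≤ SB * SC := by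
      rw [hSB, hSC, Finset.sum_mul_sum]
      exact Finset.sum_le_sum fun i _ => Finset.sum_le_sum fun j _ => hg_le i j
    have hdv : (∑ i ∈ A, if G.Adj v i then y i else 0) = SB := by
      rw [hSB, hB, Finset.sum_filter]
    have b2 : (∑ i ∈ A \ B, ∑ j ∈ B, g i j) + (∑ i ∈ A \ B, ∑ j ∈ A \ B, g i j)
        ≤ SC * SB := by
      have step : ∀ i ∈ A \ B, (∑ j ∈ B, g i j) + (∑ j ∈ A \ B, g i j)
          ≤ y i * SB := by
        intro i hi
        have hcomb : (∑ j ∈ B, g i j) + (∑ j ∈ A \ B, g i j) = ∑ j ∈ A, g i j := by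
          rw [add_comm]; exact Finset.sum_sdiff hBA
        rw [hcomb]
        have hfac : (∑ j ∈ A, g i j) = y i * ∑ j ∈ A, if G.Adj i j then y j else 0 := by
          rw [Finset.mul_sum]
          refine Finset.sum_congr rfl fun j _ => ?_
          rw [hg]; dsimp only; rw [mul_ite, mul_zero]
        rw [hfac]
        refine mul_le_mul_of_nonneg_left ?_ (hy i)
        calc (∑ j ∈ A, if G.Adj i j then y j else 0)
            ≤ ∑ j ∈ A, if G.Adj v j then y j else 0 :=
              hvmax i (Finset.mem_sdiff.1 hi).1
          _ = SB := hdv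
      calc (∑ i ∈ A \ B, ∑ j ∈ B, g i j) + (∑ i ∈ A \ B, ∑ j ∈ A \ B, g i j)
          = ∑ i ∈ A \ B, ((∑ j ∈ B, g i j) + (∑ j ∈ A \ B, g i j)) := by
            rw [Finset.sum_add_distrib]
        _ ≤ ∑ i ∈ A \ B, y i * SB := Finset.sum_le_sum step
        _ = SC * SB := by rw [hSC, Finset.sum_mul]
    -- values on the H-side
    have e1 : (∑ i ∈ B, ∑ j ∈ B, g i j) ≤ ∑ i ∈ B, ∑ j ∈ B, h i j := by
      refine le_trans hf' (le_of_eq ?_)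
      refine Finset.sum_congr rfl fun i hi => Finset.sum_congr rfl fun j hj => ?_
      rw [hh, hfdef]; dsimp only
      simp only [if_pos hi, if_pos hj]
      by_cases hfe : f' i = f' j
      · rw [if_neg (by simp [hfe]), if_neg (by simp [hfe])]
      · rw [if_pos hfe, if_pos (by simp [Fin.castSucc_inj, hfe])]
    have e2 : (∑ i ∈ B, ∑ j ∈ A \ B, h i j) = SB * SC := by
      rw [hSB, hSC, Finset.sum_mul_sum]
      refine Finset.sum_congr rfl fun i hi => Finset.sum_congr rfl fun j hj => ?_
      rw [hh, hfdef]; dsimp only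
      simp only [if_pos hi, if_neg (Finset.mem_sdiff.1 hj).2]
      rw [if_pos (Fin.castSucc_lt_last (f' i)).ne]
    have e3 : (∑ i ∈ A \ B, ∑ j ∈ B, h i j) = SC * SB := by
      rw [hSC, hSB, Finset.sum_mul_sum]
      refine Finset.sum_congr rfl fun i hi => Finset.sum_congr rfl fun j hj => ?_
      rw [hh, hfdef]; dsimp only
      simp only [if_neg (Finset.mem_sdiff.1 hi).2, if_pos hj]
      rw [if_pos (Fin.castSucc_lt_last (f' j)).ne']
    have e4 : (0 : ℝ) ≤ ∑ i ∈ A \ B, ∑ j ∈ A \ B, h i j :=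
      Finset.sum_nonneg fun i _ => Finset.sum_nonneg fun j _ => hh_nonneg i j
    rw [split g, split h, e2, e3]
    linarith [e1, b1, b2, e4]

lemma pSpec_bddAbove {n : ℕ} (G' : SimpleGraph (Fin n)) (p : ℝ) (hp : 1 ≤ p) :
    BddAbove {y : ℝ | ∃ x : Fin n → ℝ, (∑ i, |x i| ^ p) = 1 ∧
      y = ∑ i, ∑ j, if G'.Adj i j then x i * x j else 0} := by
  refine ⟨(n : ℝ) * n, ?_⟩
  rintro z ⟨x, hx1, rfl⟩
  have hxle : ∀ i, |x i| ≤ 1 := by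
    intro i
    have h1 : |x i| ^ p ≤ 1 := by
      rw [← hx1]
      exact Finset.single_le_sum
        (fun j _ => Real.rpow_nonneg (abs_nonneg _) p) (Finset.mem_univ i)
    by_contra hgt
    push_neg at hgt
    have : 1 < |x i| ^ p :=
      (Real.one_lt_rpow_iff_of_pos (lt_trans one_pos hgt)).2
        (Or.inl ⟨hgt, by linarith⟩)
    linarith
  calc (∑ i, ∑ j, if G'.Adj i j then x i * x j else 0)
      ≤ ∑ i : Fin n, ∑ j : Fin n, (1 : ℝ) := by
        refine Finset.sum_le_sum fun i _ => Finset.sum_le_sum fun j _ => ?_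
        split
        · calc x i * x j ≤ |x i * x j| := le_abs_self _
            _ = |x i| * |x j| := abs_mul _ _
            _ ≤ 1 * 1 := mul_le_mul (hxle i) (hxle j) (abs_nonneg _) zero_le_one
            _ = 1 := one_mul 1
        · exact zero_le_one
    _ = (n : ℝ) * n := by simp [mul_comm]

lemma le_pSpec {n : ℕ} (G' : SimpleGraph (Fin n)) (p : ℝ) (hp : 1 ≤ p)
    (x : Fin n → ℝ) (hx : (∑ i, |x i| ^ p) = 1) :
    (∑ i, ∑ j, if G'.Adj i j then x i * x j else 0) ≤ pSpec G' p := by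
  unfold pSpec
  exact le_csSup (pSpec_bddAbove G' p hp) ⟨x, hx, rfl⟩

lemma pSpec_nonneg {n : ℕ} (hn : 0 < n) (G' : SimpleGraph (Fin n)) (p : ℝ)
    (hp : 1 ≤ p) : 0 ≤ pSpec G' p := by
  set i0 : Fin n := ⟨0, hn⟩ with hi0
  set x0 : Fin n → ℝ := fun i => if i = i0 then 1 else 0 with hx0
  have hx : (∑ i, |x0 i| ^ p) = 1 := by
    have h1 : ∀ i : Fin n, |x0 i| ^ p = if i = i0 then 1 else 0 := by
      intro i
      rw [hx0]
      dsimp only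
      split
      · rw [abs_one, Real.one_rpow]
      · rw [abs_zero, Real.zero_rpow (by positivity)]
    rw [Finset.sum_congr rfl fun i _ => h1 i]
    simp
  have hz : (∑ i, ∑ j, if G'.Adj i j then x0 i * x0 j else 0) = 0 := by
    refine Finset.sum_eq_zero fun i _ => Finset.sum_eq_zero fun j _ => ?_
    split
    · rename_i hadj
      have hne : i ≠ j := hadj.ne
      rw [hx0]
      dsimp only
      by_cases hii : i = i0
      · rw [if_pos hii, if_neg (fun hjj => hne (hii.trans hjj.symm)), mul_zero]
      · rw [if_neg hii, zero_mul]
    · rfl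
  calc (0 : ℝ) = ∑ i, ∑ j, if G'.Adj i j then x0 i * x0 j else 0 := hz.symm
    _ ≤ pSpec G' p := le_pSpec G' p hp x0 hx

theorem stmt12 {n : ℕ} (r : ℕ) (hr : 2 ≤ r) (p : ℝ) (hp : 1 ≤ p)
    (G : SimpleGraph (Fin n)) (hG : G.CliqueFree (r + 1)) :
    ∃ f : Fin n → Fin r,
      pSpec G p ≤ pSpec (SimpleGraph.comap f (⊤ : SimpleGraph (Fin r))) p := by
  by_cases hn : n = 0
  · subst hn
    refine ⟨Fin.elim0, ?_⟩
    have hempty : ∀ G' : SimpleGraph (Fin 0), pSpec G' p = 0 := by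
      intro G'
      unfold pSpec
      convert Real.sSup_empty using 2
      ext z
      simp
    rw [hempty, hempty]
  · have hnpos : 0 < n := Nat.pos_of_ne_zero hn
    have : Nonempty (Fin r) := ⟨⟨0, by omega⟩⟩
    obtain ⟨F, _, hFmax⟩ := Finset.univ.exists_max_image
      (fun f : Fin n → Fin r => pSpec (SimpleGraph.comap f (⊤ : SimpleGraph (Fin r))) p)
      Finset.univ_nonempty
    refine ⟨F, ?_⟩
    have hFnonneg : 0 ≤ pSpec (SimpleGraph.comap F (⊤ : SimpleGraph (Fin r))) p :=
      pSpec_nonneg hnpos _ p hp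
    unfold pSpec
    refine Real.sSup_le ?_ hFnonneg
    rintro z ⟨x, hx1, rfl⟩
    obtain ⟨f, hf⟩ := key_lemma G (fun i => |x i|) (fun i => abs_nonneg _) r
      (by omega) Finset.univ (fun t _ ht => hG t ht)
    have step1 : (∑ i, ∑ j, if G.Adj i j then x i * x j else 0)
        ≤ ∑ i, ∑ j, if G.Adj i j then |x i| * |x j| else 0 := by
      refine Finset.sum_le_sum fun i _ => Finset.sum_le_sum fun j _ => ?_
      split
      · exact le_trans (le_abs_self _) (le_of_eq (abs_mul _ _))
      · exact le_rfl
    have habs : (∑ i, |(fun k => |x k|) i| ^ p) = 1 := by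
      simp only [abs_abs]
      exact hx1
    have step3 : (∑ i, ∑ j, if f i ≠ f j then |x i| * |x j| else 0)
        ≤ pSpec (SimpleGraph.comap f (⊤ : SimpleGraph (Fin r))) p := by
      refine le_trans (le_of_eq ?_) (le_pSpec _ p hp (fun k => |x k|) habs)
      refine Finset.sum_congr rfl fun i _ => Finset.sum_congr rfl fun j _ => ?_
      by_cases hfe : f i = f j
      · rw [if_neg (fun h => h hfe), if_neg (by simp [SimpleGraph.comap_adj, hfe])]
      · rw [if_pos hfe, if_pos (show (SimpleGraph.comap f ⊤).Adj i j by
          simpa [SimpleGraph.comap_adj, SimpleGraph.top_adj] using hfe)]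
    calc (∑ i, ∑ j, if G.Adj i j then x i * x j else 0)
        ≤ ∑ i, ∑ j, if G.Adj i j then |x i| * |x j| else 0 := step1
      _ ≤ ∑ i, ∑ j, if f i ≠ f j then |x i| * |x j| else 0 := hf
      _ ≤ pSpec (SimpleGraph.comap f (⊤ : SimpleGraph (Fin r))) p := step3
      _ ≤ pSpec (SimpleGraph.comap F (⊤ : SimpleGraph (Fin r))) p :=
          hFmax f (Finset.mem_univ f)
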